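/- Let p, q be real numbers with p, q ≥ 3 and 1/p + 1/q ≤ 1/2, let d be a real number with 3 ≤ d ≤ p, and let C be a real number with C ≤ ((q−2)/(2q))·d − 1. Then 2·C_{p,q}·C ≤ d, where C_{p,q} = q(p−2)/((p−2)(q−2) − 2). -/

import Mathlib

/-- the arithmetic core of the paper's Lemma 2.3: for real `p, q ≥ 3` with
`1/p + 1/q ≤ 1/2`, a degree `3 ≤ d ≤ p` and any `C ≤ ((q-2)/(2q))·d - 1` satisfy
`2·C_{p,q}·C ≤ d`, where `C_{p,q} = q(p-2)/((p-2)(q-2) - 2)`. -/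
theorem two_Cpq_C_le_degree (p q d C : ℝ) (hp : 3 ≤ p) (hq : 3 ≤ q)
    (hpq : 1 / p + 1 / q ≤ 1 / 2) (hd3 : 3 ≤ d) (hdp : d ≤ p)
    (hC : C ≤ ((q - 2) / (2 * q)) * d - 1) :
    2 * (q * (p - 2) / ((p - 2) * (q - 2) - 2)) * C ≤ d := by
  have hp0 : (0:ℝ) < p := by linarith
  have hq0 : (0:ℝ) < q := by linarith
  have h2 : 2 * (p + q) ≤ p * q := by
    rw [div_add_div _ _ (ne_of_gt hp0) (ne_of_gt hq0),
      div_le_div_iff₀ (by positivity) (by norm_num)] at hpq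
    nlinarith
  have hD0 : (0:ℝ) < (p - 2) * (q - 2) - 2 := by nlinarith
  have hCpq : 0 ≤ q * (p - 2) / ((p - 2) * (q - 2) - 2) := div_nonneg (by nlinarith) hD0.le
  have step : 2 * (q * (p - 2) / ((p - 2) * (q - 2) - 2)) * C ≤
      2 * (q * (p - 2) / ((p - 2) * (q - 2) - 2)) * (((q - 2) / (2 * q)) * d - 1) :=
    mul_le_mul_of_nonneg_left hC (by linarith)
  refine le_trans step ?_
  rw [show 2 * (q * (p - 2) / ((p - 2) * (q - 2) - 2)) * (((q - 2) / (2 * q)) * d - 1)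
      = (2 * (q * (p - 2)) * (((q - 2) / (2 * q)) * d - 1)) / ((p - 2) * (q - 2) - 2) from by
        ring, div_le_iff₀ hD0]
  have key : 2 * (q * (p - 2)) * (((q - 2) / (2 * q)) * d - 1)
      = (p - 2) * ((q - 2) * d - 2 * q) := by field_simp
  rw [key]
  nlinarith [mul_le_mul_of_nonneg_left hdp (by linarith : (0:ℝ) ≤ q - 3),
    mul_nonneg (by linarith : (0:ℝ) ≤ p - 3) (by linarith : (0:ℝ) ≤ q - 3)]
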